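/- If a form parameter Λ ≠ 0 for (D, σ, ε) is finite, then D is finite. -/

import Mathlib

private lemma finite_quot_ker' {G M : Type*} [AddGroup G] [AddGroup M]
    (f : G →+ M) (T : Set M) (hT : T.Finite) (hf : ∀ x, f x ∈ T) :
    Finite (G ⧸ f.ker) := by
  haveI : Finite f.range := by
    have hsub : (f.range : Set M) ⊆ T := by
      rintro _ ⟨x, rfl⟩; exact hf x
    exact (hT.subset hsub).to_subtype
  exact Finite.of_equiv _ (QuotientAddGroup.quotientKerEquivRange f).symm.toEquiv

private lemma infinite_subgroup_of_finite_quot' {G : Type*} [AddGroup G] [Infinite G]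
    (H : AddSubgroup G) (hq : Finite (G ⧸ H)) : Infinite H := by
  by_contra hinf
  rw [not_infinite_iff_finite] at hinf
  have hcard := AddSubgroup.card_eq_card_quotient_mul_card_addSubgroup H
  have hG : Nat.card G ≠ 0 := by
    rw [hcard]
    exact Nat.mul_ne_zero (Nat.card_ne_zero.mpr ⟨inferInstance, hq⟩)
      (Nat.card_ne_zero.mpr ⟨inferInstance, hinf⟩)
  haveI : Finite G := (Nat.card_ne_zero.mp hG).2
  exact not_finite G

private lemma finite_quot_of_le' {G : Type*} [AddCommGroup G] {H K : AddSubgroup G}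
    (hle : H ≤ K) (h : Finite (G ⧸ H)) : Finite (G ⧸ K) := by
  have hsurj : Function.Surjective
      (QuotientAddGroup.map H K (AddMonoidHom.id G) (fun x hx => hle hx)) := by
    intro y
    induction y using QuotientAddGroup.induction_on with
    | H x => exact ⟨QuotientAddGroup.mk x, rfl⟩
  exact Finite.of_surjective _ hsurj

private lemma core_finite_form {D : Type*} [DivisionRing D] [Infinite D]
    (σ : D → D) (Λ : AddSubgroup D) (hΛfin : (Λ : Set D).Finite)
    (l : D) (hl0 : l ≠ 0) (hlΛ : l ∈ Λ)
    (hadd : ∀ a b : D, σ (a + b) = σ a + σ b)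
    (hanti : ∀ a b : D, σ (a * b) = σ b * σ a)
    (hσ1 : σ 1 = 1)
    (hq : ∀ s : D, σ s * l * s ∈ Λ) : False := by
  classical
  -- the additive map g
  let g : D →+ D := AddMonoidHom.mk' (fun s => σ s * l + l * s)
    (fun a b => by
      show σ (a + b) * l + l * (a + b) = (σ a * l + l * a) + (σ b * l + l * b)
      rw [hadd]; noncomm_ring)
  have hg : ∀ s, g s = σ s * l + l * s := fun s => rfl
  have hgΛ : ∀ s, g s ∈ Λ := by
    intro s
    have e : g s = σ (s + 1) * l * (s + 1) - σ s * l * s - σ 1 * l * 1 := by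
      rw [hg, hadd, hσ1]; noncomm_ring
    rw [e]
    exact sub_mem (sub_mem (hq (s + 1)) (hq s)) (hq 1)
  set K := g.ker with hKdef
  have hKquot : Finite (D ⧸ K) := finite_quot_ker' g _ hΛfin hgΛ
  have hKσ : ∀ s ∈ K, σ s * l = -(l * s) := by
    intro s hs
    have h0 : g s = 0 := AddMonoidHom.mem_ker.mp hs
    rw [hg] at h0
    exact eq_neg_of_add_eq_zero_left h0
  haveI hKinf : Infinite K := infinite_subgroup_of_finite_quot' K hKquot
  -- every element of K is central
  have hcentral : ∀ s ∈ K, ∀ v : D, v * s = s * v := by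
    intro s hs
    let h : D →+ D := AddMonoidHom.mk' (fun x => l * (s * x + x * s))
      (fun a b => by
        show l * (s * (a + b) + (a + b) * s) = l * (s * a + a * s) + l * (s * b + b * s)
        noncomm_ring)
    have hh : ∀ x, h x = l * (s * x + x * s) := fun _ => rfl
    have hhK : ∀ t ∈ K, h t ∈ Λ := by
      intro t ht
      have e : h t = g (s * t) := by
        show l * (s * t + t * s) = σ (s * t) * l + l * (s * t)
        rw [hanti s t, mul_assoc (σ t) (σ s) l, hKσ s hs, mul_neg,
          ← mul_assoc (σ t) l s, hKσ t ht]
        noncomm_ring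
      rw [e]; exact hgΛ _
    set M := K ⊓ h.ker with hMdef
    haveI : Finite Λ := hΛfin.to_subtype
    have hMquot : Finite (D ⧸ M) := by
      let ψ : D →+ (D ⧸ K) × D := (QuotientAddGroup.mk' K).prod h
      have hkerψ : ψ.ker = M := by
        ext x
        constructor
        · intro hx
          have hx' : ψ x = 0 := AddMonoidHom.mem_ker.mp hx
          have h1 : (QuotientAddGroup.mk x : D ⧸ K) = 0 := congrArg Prod.fst hx'
          have h2 : h x = 0 := congrArg Prod.snd hx'
          exact AddSubgroup.mem_inf.mpr
            ⟨(QuotientAddGroup.eq_zero_iff x).mp h1, AddMonoidHom.mem_ker.mpr h2⟩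
        · intro hx
          obtain ⟨h1, h2⟩ := AddSubgroup.mem_inf.mp hx
          refine AddMonoidHom.mem_ker.mpr ?_
          show ((QuotientAddGroup.mk x : D ⧸ K), h x) = (0, 0)
          rw [(QuotientAddGroup.eq_zero_iff x).mpr h1, AddMonoidHom.mem_ker.mp h2]
      have hT : ∀ x, ψ x ∈
          Set.range (fun p : (D ⧸ K) × Λ => (p.1, h p.1.out + (p.2 : D))) := by
        intro x
        have hx : x - (QuotientAddGroup.mk x : D ⧸ K).out ∈ K := by
          have e0 : (QuotientAddGroup.mk ((QuotientAddGroup.mk x : D ⧸ K).out) : D ⧸ K)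
              = QuotientAddGroup.mk x := QuotientAddGroup.out_eq' _
          have : (QuotientAddGroup.mk (x - (QuotientAddGroup.mk x : D ⧸ K).out) : D ⧸ K)
              = 0 := by
            rw [QuotientAddGroup.mk_sub, e0, sub_self]
          exact (QuotientAddGroup.eq_zero_iff _).mp this
        refine ⟨(QuotientAddGroup.mk x,
          ⟨h x - h ((QuotientAddGroup.mk x : D ⧸ K).out), ?_⟩), ?_⟩
        · have := hhK _ hx
          rwa [map_sub] at this
        · show (_, _) = ψ x
          have : h ((QuotientAddGroup.mk x : D ⧸ K).out)
              + (h x - h ((QuotientAddGroup.mk x : D ⧸ K).out)) = h x := by abel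
          rw [this]
          rfl
      have hfin := finite_quot_ker' ψ _ (Set.finite_range _) hT
      rwa [hkerψ] at hfin
    haveI hMinf : Infinite M := infinite_subgroup_of_finite_quot' M hMquot
    obtain ⟨t₀, ht₀ne⟩ := exists_ne (0 : M)
    set t0 : D := (t₀ : D) with ht0def
    have ht0M : t0 ∈ M := t₀.2
    have ht0ne : t0 ≠ 0 := fun e => ht₀ne (Subtype.ext e)
    have hanticomm : ∀ t ∈ M, s * t + t * s = 0 := by
      intro t ht
      have h2 : h t = 0 := AddMonoidHom.mem_ker.mp ((AddSubgroup.mem_inf.mp ht).2)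
      rw [hh] at h2
      rcases mul_eq_zero.mp h2 with h3 | h3
      · exact absurd h3 hl0
      · exact h3
    -- the commutant of s
    let C : AddSubgroup D :=
      { carrier := {x | x * s = s * x}
        add_mem' := fun {a b} ha hb => by
          simp only [Set.mem_setOf_eq] at *
          rw [add_mul, mul_add, ha, hb]
        zero_mem' := by simp
        neg_mem' := fun {a} ha => by
          simp only [Set.mem_setOf_eq] at *
          rw [neg_mul, mul_neg, ha] }
    have hCmem : ∀ x, x ∈ C ↔ x * s = s * x := fun x => Iff.rfl
    have hCinv : ∀ d : D, d ≠ 0 → d ∈ C → d⁻¹ ∈ C := by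
      intro d hd0 hdC
      rw [hCmem] at hdC ⊢
      have h1 : d⁻¹ * (d * s) = s := by rw [← mul_assoc, inv_mul_cancel₀ hd0, one_mul]
      have h2 : s * d * d⁻¹ = s := by rw [mul_assoc, mul_inv_cancel₀ hd0, mul_one]
      calc d⁻¹ * s = d⁻¹ * (s * d * d⁻¹) := by rw [h2]
        _ = d⁻¹ * (d * s * d⁻¹) := by rw [← hdC]
        _ = d⁻¹ * (d * s) * d⁻¹ := (mul_assoc _ _ _).symm
        _ = s * d⁻¹ := by rw [h1]
    have hMt0C : ∀ t ∈ M, t * t0 ∈ C := by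
      intro t ht
      have e1 : t * s = -(s * t) := eq_neg_of_add_eq_zero_right (hanticomm t ht)
      have e2 : t0 * s = -(s * t0) := eq_neg_of_add_eq_zero_right (hanticomm t0 ht0M)
      rw [hCmem]
      calc t * t0 * s = t * (t0 * s) := mul_assoc _ _ _
        _ = t * -(s * t0) := by rw [e2]
        _ = -(t * (s * t0)) := by rw [mul_neg]
        _ = -(t * s * t0) := by rw [← mul_assoc]
        _ = -(-(s * t) * t0) := by rw [e1]
        _ = s * t * t0 := by rw [neg_mul, neg_neg]
        _ = s * (t * t0) := mul_assoc _ _ _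
    -- N = M * t0 has finite index and lies in C
    let u : Dˣ := Units.mk0 t0 ht0ne
    let e : D ≃+ D := AddAut.mulRight u
    have heapp : ∀ x : D, e x = x * t0 := fun x => rfl
    let N : AddSubgroup D := M.map (e : D →+ D)
    have hNquot : Finite (D ⧸ N) :=
      Finite.of_equiv _ (QuotientAddGroup.congr M N e rfl).toEquiv
    have hNC : N ≤ C := by
      rintro x ⟨m, hm, rfl⟩
      exact hMt0C m hm
    have hCquot : Finite (D ⧸ C) := finite_quot_of_le' hNC hNquot
    haveI hCinf : Infinite C := by
      have hinj : Function.Injective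
          (fun m : M => (⟨(m : D) * t0, hMt0C m m.2⟩ : C)) := by
        intro a b hab
        have : (a : D) * t0 = (b : D) * t0 := congrArg Subtype.val hab
        exact Subtype.ext (mul_right_cancel₀ ht0ne this)
      exact Infinite.of_injective _ hinj
    intro v
    by_contra hvs
    have hvC : v ∉ C := fun hmem => hvs ((hCmem v).mp hmem)
    have hinj : Function.Injective
        (fun c : C => (QuotientAddGroup.mk (v * (c : D)) : D ⧸ C)) := by
      intro a b hab
      by_contra hne
      have hd : (a : D) - (b : D) ∈ C := sub_mem a.2 b.2
      have hd0 : (a : D) - (b : D) ≠ 0 := by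
        intro e0
        exact hne (Subtype.ext (sub_eq_zero.mp e0))
      have hvd : v * ((a : D) - (b : D)) ∈ C := by
        have : -(v * (a : D)) + v * (b : D) ∈ C := (QuotientAddGroup.eq).mp hab
        have hmem := C.neg_mem this
        rw [neg_add, neg_neg, ← mul_neg, ← mul_add] at hmem
        rwa [sub_eq_add_neg]
      set d : D := (a : D) - (b : D) with hddef
      have hdinv : d⁻¹ ∈ C := hCinv d hd0 hd
      have hvmem : v ∈ C := by
        have hv : v = v * d * d⁻¹ := (mul_inv_cancel_right₀ hd0 v).symm
        rw [hCmem, hv]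
        calc v * d * d⁻¹ * s = v * d * (d⁻¹ * s) := mul_assoc _ _ _
          _ = v * d * (s * d⁻¹) := by rw [(hCmem d⁻¹).mp hdinv]
          _ = v * d * s * d⁻¹ := (mul_assoc _ _ _).symm
          _ = s * (v * d) * d⁻¹ := by rw [(hCmem (v * d)).mp hvd]
          _ = s * (v * d * d⁻¹) := mul_assoc _ _ _
      exact hvC hvmem
    haveI := Finite.of_injective _ hinj
    exact not_finite C
  -- the center contains K, hence D is commutative
  let Z : AddSubgroup D :=
    { carrier := {x | ∀ y, x * y = y * x}
      add_mem' := fun {a b} ha hb y => by rw [add_mul, mul_add, ha y, hb y]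
      zero_mem' := fun y => by simp
      neg_mem' := fun {a} ha y => by rw [neg_mul, mul_neg, ha y] }
  have hZmem : ∀ x, x ∈ Z ↔ ∀ y, x * y = y * x := fun x => Iff.rfl
  have hKZ : K ≤ Z := fun s hs => (hZmem s).mpr (fun y => (hcentral s hs y).symm)
  have hZquot : Finite (D ⧸ Z) := finite_quot_of_le' hKZ hKquot
  haveI hZinf : Infinite Z := by
    have hinjZ : Function.Injective (fun k : K => (⟨(k : D), hKZ k.2⟩ : Z)) := by
      intro a b hab
      have h1 := congrArg Subtype.val hab
      exact Subtype.ext h1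
    exact Infinite.of_injective _ hinjZ
  have hcomm : ∀ x y : D, x * y = y * x := by
    by_contra hne
    push_neg at hne
    obtain ⟨v, y, hvy⟩ := hne
    have hvZ : v ∉ Z := fun hz => hvy ((hZmem v).mp hz y)
    have hZinvmem : ∀ d : D, d ≠ 0 → d ∈ Z → d⁻¹ ∈ Z := by
      intro d hd0 hdZ
      rw [hZmem] at hdZ ⊢
      intro w
      have h1 : d⁻¹ * (d * w) = w := by rw [← mul_assoc, inv_mul_cancel₀ hd0, one_mul]
      have h2 : w * d * d⁻¹ = w := by rw [mul_assoc, mul_inv_cancel₀ hd0, mul_one]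
      calc d⁻¹ * w = d⁻¹ * (w * d * d⁻¹) := by rw [h2]
        _ = d⁻¹ * (d * w * d⁻¹) := by rw [← hdZ w]
        _ = d⁻¹ * (d * w) * d⁻¹ := (mul_assoc _ _ _).symm
        _ = w * d⁻¹ := by rw [h1]
    have hinj : Function.Injective
        (fun z : Z => (QuotientAddGroup.mk (v * (z : D)) : D ⧸ Z)) := by
      intro a b hab
      by_contra hne2
      have hd : (a : D) - (b : D) ∈ Z := sub_mem a.2 b.2
      have hd0 : (a : D) - (b : D) ≠ 0 := by
        intro e0
        exact hne2 (Subtype.ext (sub_eq_zero.mp e0))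
      have hvd : v * ((a : D) - (b : D)) ∈ Z := by
        have h1 : -(v * (a : D)) + v * (b : D) ∈ Z := (QuotientAddGroup.eq).mp hab
        have hmem := Z.neg_mem h1
        rw [neg_add, neg_neg, ← mul_neg, ← mul_add] at hmem
        rwa [sub_eq_add_neg]
      set d : D := (a : D) - (b : D) with hddef
      have hdinv : d⁻¹ ∈ Z := hZinvmem d hd0 hd
      have hvmem : v ∈ Z := by
        have hv : v = v * d * d⁻¹ := (mul_inv_cancel_right₀ hd0 v).symm
        rw [hZmem, hv]
        intro w
        calc v * d * d⁻¹ * w = v * d * (d⁻¹ * w) := mul_assoc _ _ _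
          _ = v * d * (w * d⁻¹) := by rw [(hZmem d⁻¹).mp hdinv w]
          _ = v * d * w * d⁻¹ := (mul_assoc _ _ _).symm
          _ = w * (v * d) * d⁻¹ := by rw [(hZmem (v * d)).mp hvd w]
          _ = w * (v * d * d⁻¹) := mul_assoc _ _ _
      exact hvZ hvmem
    haveI := Finite.of_injective _ hinj
    exact not_finite Z
  -- final pigeonhole: squares of elements of K land in a finite set
  have hsqmem : ∀ s ∈ K, l * (s * s) ∈ Λ := by
    intro s hs
    have hσs : σ s = -s := by
      have h1 : σ s * l = -(l * s) := hKσ s hs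
      rw [hcomm l s, ← neg_mul] at h1
      exact mul_right_cancel₀ hl0 h1
    have h1 := hq s
    rw [hσs] at h1
    have e : -(-s * l * s) = l * (s * s) := by
      rw [neg_mul, neg_mul, neg_neg, hcomm s l, mul_assoc]
    rw [← e]
    exact neg_mem h1
  haveI : Finite Λ := hΛfin.to_subtype
  obtain ⟨c, hc⟩ := Finite.exists_infinite_fiber
    (fun k : K => (⟨l * ((k : D) * (k : D)), hsqmem k k.2⟩ : Λ))
  rw [Set.infinite_coe_iff] at hc
  obtain ⟨s0, hs0⟩ := hc.nonempty
  have hsub : (fun k : K => (⟨l * ((k : D) * (k : D)), hsqmem k k.2⟩ : Λ)) ⁻¹' {c}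
      ⊆ {s0, -s0} := by
    intro t ht
    have h1 : l * ((t : D) * (t : D)) = l * ((s0 : D) * (s0 : D)) := by
      have e1 : (⟨l * ((t : D) * (t : D)), hsqmem t t.2⟩ : Λ)
          = (⟨l * ((s0 : D) * (s0 : D)), hsqmem s0 s0.2⟩ : Λ) := by
        rw [Set.mem_preimage, Set.mem_singleton_iff] at ht hs0
        rw [ht, hs0]
      exact congrArg Subtype.val e1
    have h2 : (t : D) * (t : D) = (s0 : D) * (s0 : D) := mul_left_cancel₀ hl0 h1
    have h3 : ((t : D) - (s0 : D)) * ((t : D) + (s0 : D)) = 0 := by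
      rw [sub_mul, mul_add, mul_add, h2, hcomm (t : D) (s0 : D)]
      abel
    rcases mul_eq_zero.mp h3 with h4 | h4
    · left
      exact Subtype.ext (sub_eq_zero.mp h4)
    · right
      have h5 : (t : D) = -(s0 : D) := eq_neg_of_add_eq_zero_left h4
      exact Subtype.ext (by rw [AddSubgroup.coe_neg]; exact h5)
  exact hc (Set.Finite.subset (Set.Finite.insert _ (Set.finite_singleton _)) hsub)

/-- If a nonzero form parameter `Λ` for `(D, σ, ε)` is finite, then the
division ring `D` is finite. Here `σ` is an anti-automorphism of `D`,
`ε^σ·ε = 1`, `a^{σ²} = ε·a·ε⁻¹`, and the form parameter `Λ` is an additive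
subgroup with `D_{σ,-ε} = {c - c^σ ε} ⊆ Λ ⊆ D^{σ,-ε} = {c : c^σ ε = -c}`
and `s^σ·Λ·s ⊆ Λ` for all `s ∈ D`. -/
theorem finite_of_finite_form_parameter {D : Type*} [DivisionRing D]
    (σ : D → D) (ε : D) (Λ : AddSubgroup D)
    (hσbij : Function.Bijective σ)
    (hadd : ∀ a b : D, σ (a + b) = σ a + σ b)
    (hanti : ∀ a b : D, σ (a * b) = σ b * σ a)
    (hε : σ ε * ε = 1)
    (hsq : ∀ a : D, σ (σ a) = ε * a * ε⁻¹)
    (hlow : ∀ c : D, c - σ c * ε ∈ Λ)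
    (hup : ∀ x ∈ Λ, σ x * ε = -x)
    (hstab : ∀ s : D, ∀ x ∈ Λ, σ s * x * s ∈ Λ)
    (hΛne : Λ ≠ ⊥)
    (hΛfin : (Λ : Set D).Finite) :
    Finite D := by
  by_contra hfin
  rw [not_finite_iff_infinite] at hfin
  haveI := hfin
  obtain ⟨l, hlΛ, hl0⟩ : ∃ x ∈ Λ, x ≠ 0 := by
    rcases Λ.bot_or_exists_ne_zero with h | h
    · exact absurd h hΛne
    · exact h
  have hσ0 : σ 0 = 0 := by
    have h := hadd 0 0
    rw [add_zero] at h
    exact (add_eq_right.mp h.symm)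
  have hσ1 : σ 1 = 1 := by
    have h := hanti 1 1
    rw [mul_one] at h
    have h1 : σ 1 ≠ 0 := fun e =>
      one_ne_zero (hσbij.injective (e.trans hσ0.symm))
    have h2 : σ 1 * σ 1 = σ 1 * 1 := by rw [mul_one, ← h]
    exact mul_left_cancel₀ h1 h2
  exact core_finite_form σ Λ hΛfin l hl0 hlΛ hadd hanti hσ1 (fun s => hstab s l hlΛ)
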